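/- Let L be a Lie algebra in which any two commuting elements are linearly dependent, and let V be an L-module. Then the semidirect product L ⋉ V is zpd if and only if L is zpd and V is zad. -/

import Mathlib

set_option linter.unusedSectionVars false

/-- The linear span of all brackets `⁅x, y⁆` in a Lie algebra `L` over `F`,
i.e. the derived subalgebra `[L, L]` viewed as a subspace. -/
def lieBracketSpan (F L : Type*) [Field F] [LieRing L] [LieAlgebra F L] : Submodule F L :=
  Submodule.span F {z : L | ∃ x y : L, ⁅x, y⁆ = z}

/-- A Lie algebra `L` over a field `F` is zero product determined (zpd) if every bilinear
map `f : L × L → F` vanishing on commuting pairs factors through the bracket via a linear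
map `Φ : [L, L] → F`. -/
def IsZPD (F L : Type*) [Field F] [LieRing L] [LieAlgebra F L] : Prop :=
  ∀ f : L →ₗ[F] L →ₗ[F] F, (∀ x y : L, ⁅x, y⁆ = 0 → f x y = 0) →
    ∃ Φ : lieBracketSpan F L →ₗ[F] F,
      ∀ x y : L, f x y = Φ ⟨⁅x, y⁆, Submodule.subset_span ⟨x, y, rfl⟩⟩


/-- The subspace `L·V` of a Lie module, spanned by all `⁅x, v⁆`. -/
def lieActionSpan (F L V : Type*) [Field F] [LieRing L] [LieAlgebra F L]
    [AddCommGroup V] [Module F V] [LieRingModule L V] : Submodule F V :=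
  Submodule.span F {z : V | ∃ (x : L) (v : V), ⁅x, v⁆ = z}

/-- A module `V` over a Lie algebra `L` is zero action determined (zad) if every bilinear
map `f : L × V → F` with `f(x,v) = 0` whenever `x·v = 0` factors through the action via a
linear map `Φ : L·V → F`. -/
def IsZAD (F L V : Type*) [Field F] [LieRing L] [LieAlgebra F L]
    [AddCommGroup V] [Module F V] [LieRingModule L V] [LieModule F L V] : Prop :=
  ∀ f : L →ₗ[F] V →ₗ[F] F, (∀ (x : L) (v : V), ⁅x, v⁆ = 0 → f x v = 0) →
    ∃ Φ : lieActionSpan F L V →ₗ[F] F,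
      ∀ (x : L) (v : V), f x v = Φ ⟨⁅x, v⁆, Submodule.subset_span ⟨x, v, rfl⟩⟩


/-- The semidirect product `L ⋉ V` of a Lie algebra and a Lie module, as a type. -/
def SemidirectProduct' (L V : Type*) := L × V

namespace SemidirectProduct'

variable (F L V : Type*) [Field F] [LieRing L] [LieAlgebra F L]
  [AddCommGroup V] [Module F V] [LieRingModule L V] [LieModule F L V]

instance : AddCommGroup (SemidirectProduct' L V) :=
  inferInstanceAs (AddCommGroup (L × V))

instance : Module F (SemidirectProduct' L V) := inferInstanceAs (Module F (L × V))

/-- Build an element of `L ⋉ V`. -/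
def mk (x : L) (v : V) : SemidirectProduct' L V := (x, v)

instance : LieRing (SemidirectProduct' L V) where
  bracket a b := mk L V ⁅a.1, b.1⁆ (⁅a.1, b.2⁆ - ⁅b.1, a.2⁆)
  add_lie a b c := by
    show mk L V ⁅a.1 + b.1, c.1⁆ (⁅a.1 + b.1, c.2⁆ - ⁅c.1, a.2 + b.2⁆) =
      mk L V (⁅a.1, c.1⁆ + ⁅b.1, c.1⁆)
        ((⁅a.1, c.2⁆ - ⁅c.1, a.2⁆) + (⁅b.1, c.2⁆ - ⁅c.1, b.2⁆))
    exact congrArg₂ Prod.mk (by rw [add_lie]) (by rw [add_lie, lie_add]; abel)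
  lie_add a b c := by
    show mk L V ⁅a.1, b.1 + c.1⁆ (⁅a.1, b.2 + c.2⁆ - ⁅b.1 + c.1, a.2⁆) =
      mk L V (⁅a.1, b.1⁆ + ⁅a.1, c.1⁆)
        ((⁅a.1, b.2⁆ - ⁅b.1, a.2⁆) + (⁅a.1, c.2⁆ - ⁅c.1, a.2⁆))
    exact congrArg₂ Prod.mk (by rw [lie_add]) (by rw [lie_add, add_lie]; abel)
  lie_self a := by
    show mk L V ⁅a.1, a.1⁆ (⁅a.1, a.2⁆ - ⁅a.1, a.2⁆) = (0 : L × V)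
    exact congrArg₂ Prod.mk (by simp) (by simp)
  leibniz_lie a b c := by
    show mk L V ⁅a.1, ⁅b.1, c.1⁆⁆ (⁅a.1, ⁅b.1, c.2⁆ - ⁅c.1, b.2⁆⁆ - ⁅⁅b.1, c.1⁆, a.2⁆) =
      mk L V (⁅⁅a.1, b.1⁆, c.1⁆ + ⁅b.1, ⁅a.1, c.1⁆⁆)
        ((⁅⁅a.1, b.1⁆, c.2⁆ - ⁅c.1, ⁅a.1, b.2⁆ - ⁅b.1, a.2⁆⁆) +
          (⁅b.1, ⁅a.1, c.2⁆ - ⁅c.1, a.2⁆⁆ - ⁅⁅a.1, c.1⁆, b.2⁆))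
    refine congrArg₂ Prod.mk ?_ ?_
    · rw [leibniz_lie]
    · simp only [lie_sub, sub_lie, lie_lie]
      abel

instance : LieAlgebra F (SemidirectProduct' L V) where
  lie_smul t a b := by
    show mk L V ⁅a.1, t • b.1⁆ (⁅a.1, t • b.2⁆ - ⁅t • b.1, a.2⁆) =
      mk L V (t • ⁅a.1, b.1⁆) (t • (⁅a.1, b.2⁆ - ⁅b.1, a.2⁆))
    exact congrArg₂ Prod.mk (by rw [lie_smul]) (by rw [lie_smul, smul_lie, smul_sub])

theorem bracket_def (a b : SemidirectProduct' L V) :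
    ⁅a, b⁆ = mk L V ⁅a.1, b.1⁆ (⁅a.1, b.2⁆ - ⁅b.1, a.2⁆) := rfl

end SemidirectProduct'


section Aux

variable {F L V : Type*} [Field F] [LieRing L] [LieAlgebra F L]
  [AddCommGroup V] [Module F V] [LieRingModule L V] [LieModule F L V]

theorem sd_bracket_mk (x y : L) (u v : V) :
    ⁅SemidirectProduct'.mk L V x u, SemidirectProduct'.mk L V y v⁆ =
      SemidirectProduct'.mk L V ⁅x, y⁆ (⁅x, v⁆ - ⁅y, u⁆) := rfl

theorem sd_mk_eq_zero (x : L) (u : V) :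
    SemidirectProduct'.mk L V x u = 0 ↔ x = 0 ∧ u = 0 := by
  show (x, u) = ((0 : L), (0 : V)) ↔ _
  rw [Prod.mk.injEq]

theorem sd_bracket_eq_zero_iff (a b : SemidirectProduct' L V) :
    ⁅a, b⁆ = 0 ↔ ⁅a.1, b.1⁆ = 0 ∧ ⁅a.1, b.2⁆ = ⁅b.1, a.2⁆ := by
  rw [SemidirectProduct'.bracket_def, sd_mk_eq_zero, sub_eq_zero]

theorem sd_inl_mem (z : L) (hz : z ∈ lieBracketSpan F L) :
    LinearMap.inl F L V z ∈ lieBracketSpan F (SemidirectProduct' L V) := by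
  induction hz using Submodule.span_induction with
  | mem w hw =>
    obtain ⟨x, y, rfl⟩ := hw
    refine Submodule.subset_span
      ⟨SemidirectProduct'.mk L V x 0, SemidirectProduct'.mk L V y 0, ?_⟩
    rw [sd_bracket_mk]
    show ((⁅x, y⁆ : L), (⁅x, (0:V)⁆ - ⁅y, (0:V)⁆ : V)) = ((⁅x, y⁆ : L), (0 : V))
    simp
  | zero => rw [map_zero]; exact Submodule.zero_mem _
  | add _ _ _ _ h1 h2 => rw [map_add]; exact Submodule.add_mem _ h1 h2
  | smul c _ _ h => rw [map_smul]; exact Submodule.smul_mem _ _ h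

theorem sd_inr_mem (w : V) (hw : w ∈ lieActionSpan F L V) :
    LinearMap.inr F L V w ∈ lieBracketSpan F (SemidirectProduct' L V) := by
  induction hw using Submodule.span_induction with
  | mem w hw =>
    obtain ⟨x, v, rfl⟩ := hw
    refine Submodule.subset_span
      ⟨SemidirectProduct'.mk L V x 0, SemidirectProduct'.mk L V 0 v, ?_⟩
    rw [sd_bracket_mk]
    show ((⁅x, (0:L)⁆ : L), (⁅x, v⁆ - ⁅(0:L), (0:V)⁆ : V)) = ((0 : L), (⁅x, v⁆ : V))
    simp
  | zero => rw [map_zero]; exact Submodule.zero_mem _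
  | add _ _ _ _ h1 h2 => rw [map_add]; exact Submodule.add_mem _ h1 h2
  | smul c _ _ h => rw [map_smul]; exact Submodule.smul_mem _ _ h

/-- Key consequence of the dependence hypothesis. -/
theorem dep_key (hdep : ∀ x y : L, ⁅x, y⁆ = 0 → ¬ LinearIndependent F ![x, y])
    (f : L →ₗ[F] V →ₗ[F] F) (hf : ∀ (x : L) (v : V), ⁅x, v⁆ = 0 → f x v = 0)
    (x y : L) (u v : V) (hxy : ⁅x, y⁆ = 0) (huv : ⁅x, v⁆ = ⁅y, u⁆) :
    f x v = f y u := by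
  have h := hdep x y hxy
  rw [LinearIndependent.pair_iff] at h
  push_neg at h
  obtain ⟨s, t, hst, hne⟩ := h
  by_cases hs : s = 0
  · -- then t ≠ 0 and y = 0
    have ht : t ≠ 0 := fun ht0 => hne (hs.symm ▸ ht0.symm ▸ rfl) ht0
    have hy : y = 0 := by
      have : t • y = 0 := by simpa [hs] using hst
      exact (smul_eq_zero.mp this).resolve_left ht
    subst hy
    have hxv : ⁅x, v⁆ = 0 := by simpa using huv
    rw [hf x v hxv]
    simp
  · -- x = c • y with c = -(s⁻¹ * t)
    have hx : x = (-(s⁻¹ * t)) • y := by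
      have h1 : s • x = -(t • y) := eq_neg_of_add_eq_zero_left hst
      calc x = s⁻¹ • (s • x) := by rw [smul_smul, inv_mul_cancel₀ hs, one_smul]
        _ = (-(s⁻¹ * t)) • y := by rw [h1, smul_neg, smul_smul, neg_smul]
    set c := -(s⁻¹ * t) with hc
    have h2 : ⁅y, u - c • v⁆ = 0 := by
      rw [lie_sub, lie_smul, sub_eq_zero, ← huv, hx, smul_lie]
    have h3 : f y (u - c • v) = 0 := hf _ _ h2
    have h4 : f y u = c • f y v := by
      have := h3
      rw [map_sub, map_smul, sub_eq_zero] at this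
      simpa using this
    rw [hx, map_smul, LinearMap.smul_apply, h4]

end Aux

/-- if any two commuting elements of `L` are linearly dependent, then for any
`L`-module `V` the semidirect product `L ⋉ V` is zpd iff `L` is zpd and `V` is zad. -/
theorem isZPD_semidirect_iff (F L V : Type*) [Field F] [LieRing L] [LieAlgebra F L]
    [AddCommGroup V] [Module F V] [LieRingModule L V] [LieModule F L V]
    (hdep : ∀ x y : L, ⁅x, y⁆ = 0 → ¬ LinearIndependent F ![x, y]) :
    IsZPD F (SemidirectProduct' L V) ↔ IsZPD F L ∧ IsZAD F L V := by
  constructor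
  · intro hW
    constructor
    · -- IsZPD F L
      intro f hf
      set g : SemidirectProduct' L V →ₗ[F] SemidirectProduct' L V →ₗ[F] F :=
        f.compl₁₂ (LinearMap.fst F L V) (LinearMap.fst F L V) with hgdef
      have hg : ∀ a b : SemidirectProduct' L V, ⁅a, b⁆ = 0 → g a b = 0 := by
        intro a b hab
        have h := (sd_bracket_eq_zero_iff a b).mp hab
        exact hf a.1 b.1 h.1
      obtain ⟨Φ, hΦ⟩ := hW g hg
      refine ⟨Φ.comp ((LinearMap.inl F L V).restrict (fun z hz => sd_inl_mem z hz)), ?_⟩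
      intro x y
      have h1 := hΦ (SemidirectProduct'.mk L V x 0) (SemidirectProduct'.mk L V y 0)
      have h2 : g (SemidirectProduct'.mk L V x 0) (SemidirectProduct'.mk L V y 0) = f x y := rfl
      rw [h2] at h1
      rw [h1]; show Φ _ = Φ _
      congr 1
      apply Subtype.ext
      show (⁅SemidirectProduct'.mk L V x 0, SemidirectProduct'.mk L V y 0⁆ :
          SemidirectProduct' L V) = ((⁅x, y⁆ : L), (0 : V))
      rw [sd_bracket_mk]
      show ((⁅x, y⁆ : L), (⁅x, (0:V)⁆ - ⁅y, (0:V)⁆ : V)) = ((⁅x, y⁆ : L), (0 : V))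
      simp
    · -- IsZAD F L V
      intro f hf
      set h : SemidirectProduct' L V →ₗ[F] SemidirectProduct' L V →ₗ[F] F :=
        f.compl₁₂ (LinearMap.fst F L V) (LinearMap.snd F L V) with hhdef
      set g : SemidirectProduct' L V →ₗ[F] SemidirectProduct' L V →ₗ[F] F :=
        h - h.flip with hgdef
      have hg : ∀ a b : SemidirectProduct' L V, ⁅a, b⁆ = 0 → g a b = 0 := by
        intro a b hab
        have hz := (sd_bracket_eq_zero_iff a b).mp hab
        have := dep_key hdep f hf a.1 b.1 a.2 b.2 hz.1 hz.2
        show f a.1 b.2 - f b.1 a.2 = 0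
        rw [this, sub_self]
      obtain ⟨Φ, hΦ⟩ := hW g hg
      refine ⟨Φ.comp ((LinearMap.inr F L V).restrict (fun w hw => sd_inr_mem w hw)), ?_⟩
      intro x v
      have h1 := hΦ (SemidirectProduct'.mk L V x 0) (SemidirectProduct'.mk L V 0 v)
      have h2 : g (SemidirectProduct'.mk L V x 0) (SemidirectProduct'.mk L V 0 v) = f x v := by
        show f x v - f (0 : L) (0 : V) = f x v
        simp
      rw [h2] at h1
      rw [h1]; show Φ _ = Φ _
      congr 1
      apply Subtype.ext
      show (⁅SemidirectProduct'.mk L V x 0, SemidirectProduct'.mk L V 0 v⁆ :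
          SemidirectProduct' L V) = ((0 : L), (⁅x, v⁆ : V))
      rw [sd_bracket_mk]
      show ((⁅x, (0:L)⁆ : L), (⁅x, v⁆ - ⁅(0:L), (0:V)⁆ : V)) = ((0 : L), (⁅x, v⁆ : V))
      simp
  · rintro ⟨hL, hV⟩
    intro f hf
    set f₁ : L →ₗ[F] L →ₗ[F] F :=
      f.compl₁₂ (LinearMap.inl F L V) (LinearMap.inl F L V) with hf₁def
    set f₂ : L →ₗ[F] V →ₗ[F] F :=
      f.compl₁₂ (LinearMap.inl F L V) (LinearMap.inr F L V) with hf₂def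
    set f₃ : L →ₗ[F] V →ₗ[F] F :=
      (f.compl₁₂ (LinearMap.inr F L V) (LinearMap.inl F L V)).flip with hf₃def
    set f₄ : V →ₗ[F] V →ₗ[F] F :=
      f.compl₁₂ (LinearMap.inr F L V) (LinearMap.inr F L V) with hf₄def
    have hsplit : ∀ a : SemidirectProduct' L V,
        a = SemidirectProduct'.mk L V a.1 0 + SemidirectProduct'.mk L V 0 a.2 := by
      intro a
      show a = (a.1 + 0, 0 + a.2)
      simp
      rfl
    have expand0 : ∀ (x y : L) (u v : V),
        f (SemidirectProduct'.mk L V x u) (SemidirectProduct'.mk L V y v) =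
          f₁ x y + f₂ x v + f₃ y u + f₄ u v := by
      intro x y u v
      have hx : SemidirectProduct'.mk L V x u =
          SemidirectProduct'.mk L V x 0 + SemidirectProduct'.mk L V 0 u := by
        show (x, u) = (x + 0, 0 + u); simp
      have hy : SemidirectProduct'.mk L V y v =
          SemidirectProduct'.mk L V y 0 + SemidirectProduct'.mk L V 0 v := by
        show (y, v) = (y + 0, 0 + v); simp
      rw [hx, hy]
      simp only [map_add, LinearMap.add_apply]
      have r1 : f (SemidirectProduct'.mk L V x 0) (SemidirectProduct'.mk L V y 0)
          = f₁ x y := rfl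
      have r2 : f (SemidirectProduct'.mk L V x 0) (SemidirectProduct'.mk L V 0 v)
          = f₂ x v := rfl
      have r3 : f (SemidirectProduct'.mk L V 0 u) (SemidirectProduct'.mk L V y 0)
          = f₃ y u := rfl
      have r4 : f (SemidirectProduct'.mk L V 0 u) (SemidirectProduct'.mk L V 0 v)
          = f₄ u v := rfl
      rw [r1, r2, r3, r4]
      abel
    have expand : ∀ a b : SemidirectProduct' L V,
        f a b = f₁ a.1 b.1 + f₂ a.1 b.2 + f₃ b.1 a.2 + f₄ a.2 b.2 := by
      intro a b
      exact expand0 a.1 b.1 a.2 b.2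
    have hbr1 : ∀ (x y : L), (⁅SemidirectProduct'.mk L V x 0,
        SemidirectProduct'.mk L V y 0⁆ : SemidirectProduct' L V) =
        SemidirectProduct'.mk L V ⁅x, y⁆ 0 := by
      intro x y
      rw [sd_bracket_mk]
      show ((⁅x, y⁆ : L), (⁅x, (0:V)⁆ - ⁅y, (0:V)⁆ : V)) = ((⁅x, y⁆ : L), (0 : V))
      simp
    have hbr2 : ∀ (x : L) (v : V), (⁅SemidirectProduct'.mk L V x 0,
        SemidirectProduct'.mk L V 0 v⁆ : SemidirectProduct' L V) =
        SemidirectProduct'.mk L V 0 ⁅x, v⁆ := by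
      intro x v
      rw [sd_bracket_mk]
      show ((⁅x, (0:L)⁆ : L), (⁅x, v⁆ - ⁅(0:L), (0:V)⁆ : V)) = ((0 : L), (⁅x, v⁆ : V))
      simp
    have hv₁ : ∀ x y : L, ⁅x, y⁆ = 0 → f₁ x y = 0 := by
      intro x y hxy
      have := hf (SemidirectProduct'.mk L V x 0) (SemidirectProduct'.mk L V y 0)
        (by rw [hbr1, hxy]; exact (sd_mk_eq_zero _ _).mpr ⟨rfl, rfl⟩)
      exact this
    have hv₂ : ∀ (x : L) (v : V), ⁅x, v⁆ = 0 → f₂ x v = 0 := by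
      intro x v hxv
      have := hf (SemidirectProduct'.mk L V x 0) (SemidirectProduct'.mk L V 0 v)
        (by rw [hbr2, hxv]; exact (sd_mk_eq_zero _ _).mpr ⟨rfl, rfl⟩)
      exact this
    have hv₄ : ∀ u v : V, f₄ u v = 0 := by
      intro u v
      have := hf (SemidirectProduct'.mk L V 0 u) (SemidirectProduct'.mk L V 0 v)
        (by
          rw [sd_bracket_mk]
          show ((⁅(0:L), (0:L)⁆ : L), (⁅(0:L), v⁆ - ⁅(0:L), u⁆ : V)) = ((0:L), (0:V))
          simp)
      exact this
    have hkey : ∀ (x : L) (v : V), f₃ x v = -f₂ x v := by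
      intro x v
      have h0 := hf (SemidirectProduct'.mk L V x v) (SemidirectProduct'.mk L V x v)
        (by
          rw [sd_bracket_mk]
          show ((⁅x, x⁆ : L), (⁅x, v⁆ - ⁅x, v⁆ : V)) = ((0:L), (0:V))
          simp)
      rw [expand] at h0
      simp only [SemidirectProduct'.mk] at h0
      have e1 : f₁ x x = 0 := hv₁ x x (lie_self x)
      have e4 : f₄ v v = 0 := hv₄ v v
      have h0' : f₁ x x + f₂ x v + f₃ x v + f₄ v v = 0 := h0
      rw [e1, e4] at h0'
      linear_combination h0'
    obtain ⟨Φ₁, hΦ₁⟩ := hL f₁ hv₁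
    obtain ⟨Φ₂, hΦ₂⟩ := hV f₂ hv₂
    obtain ⟨ψ₁, hψ₁⟩ := LinearMap.exists_extend Φ₁
    obtain ⟨ψ₂, hψ₂⟩ := LinearMap.exists_extend Φ₂
    have hψ₁' : ∀ (z : L) (hz : z ∈ lieBracketSpan F L), ψ₁ z = Φ₁ ⟨z, hz⟩ := by
      intro z hz
      exact congrFun (congrArg (fun g => g.toFun) hψ₁) ⟨z, hz⟩
    have hψ₂' : ∀ (w : V) (hw : w ∈ lieActionSpan F L V), ψ₂ w = Φ₂ ⟨w, hw⟩ := by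
      intro w hw
      exact congrFun (congrArg (fun g => g.toFun) hψ₂) ⟨w, hw⟩
    refine ⟨(ψ₁ ∘ₗ LinearMap.fst F L V + ψ₂ ∘ₗ LinearMap.snd F L V) ∘ₗ
      (lieBracketSpan F (SemidirectProduct' L V)).subtype, ?_⟩
    intro a b
    rw [expand]
    show _ = ψ₁ ⁅a.1, b.1⁆ + ψ₂ (⁅a.1, b.2⁆ - ⁅b.1, a.2⁆)
    rw [map_sub]
    have e1 : f₁ a.1 b.1 = ψ₁ ⁅a.1, b.1⁆ := by
      rw [hΦ₁ a.1 b.1, hψ₁' _ (Submodule.subset_span ⟨a.1, b.1, rfl⟩)]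
    have e2 : f₂ a.1 b.2 = ψ₂ ⁅a.1, b.2⁆ := by
      rw [hΦ₂ a.1 b.2, hψ₂' _ (Submodule.subset_span ⟨a.1, b.2, rfl⟩)]
    have e3 : f₂ b.1 a.2 = ψ₂ ⁅b.1, a.2⁆ := by
      rw [hΦ₂ b.1 a.2, hψ₂' _ (Submodule.subset_span ⟨b.1, a.2, rfl⟩)]
    rw [hkey b.1 a.2, hv₄, e1, e2, e3]
    ring
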